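/- Let (X, Σ, μ) be a measure space, E ∈ Σ a non-atomic set with μ(E) > 0, and let Φ₁, Φ₂ be Young functions with Φ₂ ∈ Δ₂ such that Φ₂ is not weaker than Φ₁. Then there exists f ∈ L^{Φ₁}(X) such that the restriction of f to E does not belong to L^{Φ₂}(E). -/

import Mathlib

open MeasureTheory Filter Topology

/-- A Young function: continuous, convex, even, vanishing exactly at 0,
with superlinear growth at infinity. -/
structure YoungFunction where
  toFun : ℝ → ℝ
  continuous' : Continuous toFun
  convexOn' : ConvexOn ℝ Set.univ toFun
  even' : ∀ x, toFun (-x) = toFun x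
  zero_iff' : ∀ x, toFun x = 0 ↔ x = 0
  tendsto_atTop' : Tendsto (fun x => toFun x / x) atTop atTop

instance : CoeFun YoungFunction fun _ => ℝ → ℝ := ⟨YoungFunction.toFun⟩

variable {X : Type*} [MeasurableSpace X]

/-- Membership in the Orlicz space `L^Φ(μ)`. -/
def MemOrlicz (Φ : YoungFunction) (μ : Measure X) (f : X → ℝ) : Prop :=
  AEStronglyMeasurable f μ ∧ ∃ k > 0, Integrable (fun x => Φ (k * f x)) μ

/-- The Luxemburg norm on the Orlicz space `L^Φ(μ)`. -/
noncomputable def luxNorm (Φ : YoungFunction) (μ : Measure X) (f : X → ℝ) : ℝ :=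
  sInf {k : ℝ | 0 < k ∧ ∫ x, Φ (f x / k) ∂μ ≤ 1}

/-- The generalized (right) inverse of a Young function on `[0,∞)`. -/
noncomputable def yInv (Φ : YoungFunction) (y : ℝ) : ℝ :=
  sSup {x : ℝ | 0 ≤ x ∧ Φ x ≤ y}

/-- `Φ` satisfies the `Δ₂` condition globally. -/
def YoungDeltaTwo (Φ : YoungFunction) : Prop :=
  ∃ k > 0, ∀ x : ℝ, 0 ≤ x → Φ (2 * x) ≤ k * Φ x

/-- `Φ` satisfies the `Δ'` condition globally, with constant `c`. -/
def YoungDeltaPrime (Φ : YoungFunction) (c : ℝ) : Prop :=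
  0 < c ∧ ∀ x y : ℝ, 0 ≤ x → 0 ≤ y → Φ (x * y) ≤ c * Φ x * Φ y

/-- `Φ` satisfies the `∇'` condition globally, with constant `b`. -/
def YoungNablaPrime (Φ : YoungFunction) (b : ℝ) : Prop :=
  0 < b ∧ ∀ x y : ℝ, 0 ≤ x → 0 ≤ y → Φ x * Φ y ≤ Φ (b * x * y)

/-- `Φ ≺ Ψ` : `Φ` is weaker than `Ψ`. -/
def YoungWeaker (Φ Ψ : YoungFunction) : Prop :=
  ∃ a > 0, ∃ x₀ : ℝ, 0 ≤ x₀ ∧ ∀ x : ℝ, x₀ ≤ x → Φ x ≤ Ψ (a * x)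

/-- `A` is an atom of the measure `μ`. -/
def IsAtomSet (μ : Measure X) (A : Set X) : Prop :=
  MeasurableSet A ∧ 0 < μ A ∧
    ∀ B : Set X, MeasurableSet B → B ⊆ A → μ B = 0 ∨ μ B = μ A

/-- `μ` is non-atomic on the set `S`. -/
def NonAtomicOn (μ : Measure X) (S : Set X) : Prop :=
  ∀ A : Set X, A ⊆ S → ¬ IsAtomSet μ A

/-- A linear map between Orlicz spaces (given as a map on functions) is bounded. -/
def OrliczBounded (Φ₁ Φ₂ : YoungFunction) (μ : Measure X)
    (Tmap : (X → ℝ) → (X → ℝ)) : Prop :=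
  ∃ C > 0, ∀ f : X → ℝ, MemOrlicz Φ₁ μ f →
    MemOrlicz Φ₂ μ (Tmap f) ∧ luxNorm Φ₂ μ (Tmap f) ≤ C * luxNorm Φ₁ μ f

/-- The atomic decomposition of a σ-finite measure space: `X = (⋃ n, A n) ∪ B`
with the `A n` pairwise disjoint atoms of finite measure and `B` non-atomic. -/
def AtomicDecomposition (μ : Measure X) (A : ℕ → Set X) (B : Set X) : Prop :=
  (∀ n, IsAtomSet μ (A n)) ∧ (∀ n, μ (A n) < ⊤) ∧
    Pairwise (Function.onFun Disjoint A) ∧ (∀ n, Disjoint (A n) B) ∧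
    MeasurableSet B ∧ NonAtomicOn μ B ∧ (⋃ n, A n) ∪ B = Set.univ

open scoped ENNReal

namespace YoungFunction

lemma map_zero (Φ : YoungFunction) : Φ 0 = 0 := (Φ.zero_iff' 0).2 rfl

lemma nonneg (Φ : YoungFunction) (x : ℝ) : 0 ≤ Φ x := by
  have h := Φ.convexOn'.2 (Set.mem_univ x) (Set.mem_univ (-x))
    (by norm_num : (0:ℝ) ≤ 1/2) (by norm_num : (0:ℝ) ≤ 1/2) (by norm_num)
  simp only [smul_eq_mul, Φ.even'] at h
  have : (1/2 : ℝ) * x + 1/2 * (-x) = 0 := by ring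
  rw [this, Φ.map_zero] at h
  linarith

lemma pos (Φ : YoungFunction) {x : ℝ} (hx : x ≠ 0) : 0 < Φ x :=
  (Φ.nonneg x).lt_of_ne fun h => hx ((Φ.zero_iff' x).1 h.symm)

lemma mono (Φ : YoungFunction) {a b : ℝ} (ha : 0 ≤ a) (hab : a ≤ b) : Φ a ≤ Φ b := by
  rcases eq_or_lt_of_le (ha.trans hab) with hb | hb
  · have : a = 0 := le_antisymm (hab.trans hb.symm.le) ha
    rw [this, ← hb]
  · have hθ0 : 0 ≤ a / b := div_nonneg ha hb.le
    have hθ1 : a / b ≤ 1 := div_le_one_of_le₀ hab hb.le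
    have h := Φ.convexOn'.2 (Set.mem_univ b) (Set.mem_univ 0) hθ0
      (by linarith : (0:ℝ) ≤ 1 - a / b) (by ring)
    simp only [smul_eq_mul, mul_zero, add_zero, Φ.map_zero] at h
    rw [div_mul_cancel₀ _ hb.ne'] at h
    calc Φ a ≤ a / b * Φ b := h
      _ ≤ 1 * Φ b := mul_le_mul_of_nonneg_right hθ1 (Φ.nonneg b)
      _ = Φ b := one_mul _

lemma mul_le (Φ : YoungFunction) {c x : ℝ} (hc : 1 ≤ c) (hx : 0 ≤ x) :
    c * Φ x ≤ Φ (c * x) := by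
  have hc0 : 0 < c := lt_of_lt_of_le one_pos hc
  have h := Φ.convexOn'.2 (Set.mem_univ (c * x)) (Set.mem_univ 0)
    (show (0:ℝ) ≤ 1/c by positivity)
    (show (0:ℝ) ≤ 1 - 1/c by rw [sub_nonneg, div_le_one hc0]; exact hc)
    (show 1/c + (1 - 1/c) = 1 by ring)
  simp only [smul_eq_mul, mul_zero, add_zero, Φ.map_zero] at h
  rw [show 1/c * (c*x) = x by field_simp] at h
  calc c * Φ x ≤ c * (1/c * Φ (c*x)) := by
        exact mul_le_mul_of_nonneg_left h hc0.le
    _ = Φ (c * x) := by field_simp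

lemma exists_forall_ge (Φ : YoungFunction) (M : ℝ) :
    ∃ x₀ : ℝ, 1 ≤ x₀ ∧ ∀ x, x₀ ≤ x → M ≤ Φ x := by
  have h := (Φ.tendsto_atTop'.eventually_ge_atTop (max M 0)).and (eventually_ge_atTop (1:ℝ))
  obtain ⟨x₀, hx₀⟩ := h.exists_forall_of_atTop
  refine ⟨max x₀ 1, le_max_right _ _, fun x hx => ?_⟩
  have h1 : (1:ℝ) ≤ x := le_trans (le_max_right _ _) hx
  have h2 := hx₀ x (le_trans (le_max_left _ _) hx)
  have hx0 : x ≠ 0 := by linarith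
  have : Φ x = Φ x / x * x := (div_mul_cancel₀ _ hx0).symm
  rw [this]
  calc M ≤ max M 0 := le_max_left _ _
    _ = max M 0 * 1 := (mul_one _).symm
    _ ≤ Φ x / x * x := mul_le_mul h2.1 h1 zero_le_one ((le_max_right M 0).trans h2.1)

lemma delta2_iter {Φ : YoungFunction} (hΔ : ∃ k > 0, ∀ x : ℝ, 0 ≤ x → Φ (2 * x) ≤ k * Φ x)
    {k : ℝ} (hk : 0 < k) : ∃ c > 0, ∀ x : ℝ, 0 ≤ x → Φ x ≤ c * Φ (k * x) := by
  obtain ⟨K, hK, hKs⟩ := hΔ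
  have key : ∀ m : ℕ, ∀ x : ℝ, 0 ≤ x → Φ x ≤ K ^ m * Φ (x / 2 ^ m) := by
    intro m
    induction m with
    | zero => intro x hx; simp
    | succ m ih =>
      intro x hx
      have h1 := ih x hx
      have h2 : Φ (x / 2 ^ m) ≤ K * Φ (x / 2 ^ (m+1)) := by
        have := hKs (x / 2 ^ (m+1)) (by positivity)
        rw [show 2 * (x / 2 ^ (m+1)) = x / 2 ^ m by ring] at this
        exact this
      calc Φ x ≤ K ^ m * Φ (x / 2 ^ m) := h1
        _ ≤ K ^ m * (K * Φ (x / 2 ^ (m+1))) := by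
            exact mul_le_mul_of_nonneg_left h2 (by positivity)
        _ = K ^ (m+1) * Φ (x / 2 ^ (m+1)) := by ring
  obtain ⟨m, hm⟩ := pow_unbounded_of_one_lt (1/k) (one_lt_two (α := ℝ))
  refine ⟨K ^ m, by positivity, fun x hx => ?_⟩
  refine (key m x hx).trans (mul_le_mul_of_nonneg_left ?_ (by positivity))
  apply Φ.mono (by positivity)
  rw [div_le_iff₀ (by positivity)]
  calc x = x * 1 := (mul_one x).symm
    _ ≤ x * (k * 2 ^ m) := by
        apply mul_le_mul_of_nonneg_left _ hx
        rw [div_lt_iff₀ hk] at hm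
        nlinarith [hm]
    _ = k * x * 2 ^ m := by ring

end YoungFunction

namespace NonAtomicOn

variable {μ : Measure X} {E : Set X}

lemma split (hEna : NonAtomicOn μ E) {A : Set X} (hAE : A ⊆ E)
    (hA : MeasurableSet A) (h0 : 0 < μ A) :
    ∃ B, B ⊆ A ∧ MeasurableSet B ∧ 0 < μ B ∧ μ B < μ A := by
  have h := hEna A hAE
  unfold IsAtomSet at h
  push_neg at h
  obtain ⟨B, hBm, hBs, hB1, hB2⟩ := h hA h0
  exact ⟨B, hBs, hBm, pos_iff_ne_zero.mpr hB1, (measure_mono hBs).lt_of_ne hB2⟩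

lemma half (hEna : NonAtomicOn μ E) {A : Set X} (hAE : A ⊆ E)
    (hA : MeasurableSet A) (h0 : 0 < μ A) (hfin : μ A ≠ ⊤) :
    ∃ B, B ⊆ A ∧ MeasurableSet B ∧ 0 < μ B ∧ 2 * μ B ≤ μ A := by
  obtain ⟨B, hBs, hBm, hB0, hBlt⟩ := hEna.split hAE hA h0
  have hBfin : μ B ≠ ⊤ := (hBlt.trans_le le_top).ne
  have hdiff : μ (A \ B) = μ A - μ B := measure_diff hBs hBm.nullMeasurableSet hBfin
  have hsum : μ B + μ (A \ B) = μ A := by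
    rw [hdiff, add_tsub_cancel_of_le (measure_mono hBs)]
  rcases le_total (μ B) (μ (A \ B)) with h | h
  · exact ⟨B, hBs, hBm, hB0, by rw [two_mul]; calc μ B + μ B ≤ μ B + μ (A \ B) := by gcongr
      _ = μ A := hsum⟩
  · refine ⟨A \ B, Set.diff_subset, hA.diff hBm, ?_, ?_⟩
    · rw [hdiff]; exact tsub_pos_of_lt hBlt
    · rw [two_mul]
      calc μ (A \ B) + μ (A \ B) ≤ μ B + μ (A \ B) := by gcongr
        _ = μ A := hsum

lemma exists_small (hEna : NonAtomicOn μ E) {A : Set X} (hAE : A ⊆ E)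
    (hA : MeasurableSet A) (h0 : 0 < μ A) {ε : ℝ≥0∞} (hε : ε ≠ 0) :
    ∃ B, B ⊆ A ∧ MeasurableSet B ∧ 0 < μ B ∧ μ B ≤ ε := by
  -- first reduce to finite measure
  obtain ⟨A', hA's, hA'm, hA'0, hA'fin⟩ :
      ∃ A', A' ⊆ A ∧ MeasurableSet A' ∧ 0 < μ A' ∧ μ A' ≠ ⊤ := by
    by_cases hfin : μ A = ⊤
    · obtain ⟨B, hBs, hBm, hB0, hBlt⟩ := hEna.split hAE hA h0
      exact ⟨B, hBs, hBm, hB0, by rw [hfin] at hBlt; exact hBlt.ne⟩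
    · exact ⟨A, subset_rfl, hA, h0, hfin⟩
  have hA'E : A' ⊆ E := hA's.trans hAE
  have key : ∀ k : ℕ, ∃ B, B ⊆ A' ∧ MeasurableSet B ∧ 0 < μ B ∧ 2 ^ k * μ B ≤ μ A' := by
    intro k
    induction k with
    | zero => exact ⟨A', subset_rfl, hA'm, hA'0, by simp⟩
    | succ k ih =>
      obtain ⟨B, hBs, hBm, hB0, hBle⟩ := ih
      have hBfin : μ B ≠ ⊤ := by
        intro h
        rw [h] at hBle
        simp [ENNReal.mul_top (by positivity : (2:ℝ≥0∞)^k ≠ 0)] at hBle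
        exact hA'fin hBle
      obtain ⟨C, hCs, hCm, hC0, hCle⟩ := hEna.half (hBs.trans hA'E) hBm hB0 hBfin
      refine ⟨C, hCs.trans hBs, hCm, hC0, ?_⟩
      calc 2 ^ (k+1) * μ C = 2 ^ k * (2 * μ C) := by ring
        _ ≤ 2 ^ k * μ B := by gcongr
        _ ≤ μ A' := hBle
  obtain ⟨n, hn⟩ := ENNReal.exists_nat_gt (r := μ A' / ε) (ENNReal.div_lt_top hA'fin hε).ne
  obtain ⟨B, hBs, hBm, hB0, hBle⟩ := key n
  refine ⟨B, hBs.trans hA's, hBm, hB0, ?_⟩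
  have h2n : (n : ℝ≥0∞) ≤ 2 ^ n := by
    exact_mod_cast (Nat.lt_two_pow_self (n := n)).le
  have h1 : μ A' < 2 ^ n * ε := by
    rw [ENNReal.div_lt_iff (Or.inl hε) (Or.inr hA'fin)] at hn
    calc μ A' < n * ε := hn
      _ ≤ 2 ^ n * ε := by gcongr
  have h2 : 2 ^ n * μ B < 2 ^ n * ε := lt_of_le_of_lt hBle h1
  exact le_of_lt ((ENNReal.mul_lt_mul_iff_right (by positivity) (by simp)).mp h2)

end NonAtomicOn

namespace NonAtomicOn

variable {μ : Measure X} {E : Set X}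

lemma sierpinski (hEna : NonAtomicOn μ E) {A : Set X} (hAE : A ⊆ E)
    (hA : MeasurableSet A) {t : ℝ≥0∞} (ht : t ≤ μ A) (htfin : t ≠ ⊤) :
    ∃ B, B ⊆ A ∧ MeasurableSet B ∧ μ B = t := by
  -- the greedy step
  have step : ∀ B : Set X, B ⊆ A → MeasurableSet B → μ B ≤ t →
      ∃ C : Set X, C ⊆ A \ B ∧ MeasurableSet C ∧ μ B + μ C ≤ t ∧
        ∀ D : Set X, D ⊆ A \ B → MeasurableSet D → μ D ≤ t - μ B → μ D ≤ 2 * μ C := by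
    intro B hBA hBm hBt
    set S : Set ℝ≥0∞ := {r | ∃ D : Set X, D ⊆ A \ B ∧ MeasurableSet D ∧ μ D ≤ t - μ B ∧ μ D = r}
      with hS
    have hSle : sSup S ≤ t - μ B := by
      apply sSup_le
      rintro r ⟨D, -, -, hD, rfl⟩
      exact hD
    by_cases hs : sSup S = 0
    · refine ⟨∅, Set.empty_subset _, MeasurableSet.empty, by simpa using hBt, ?_⟩
      intro D hD1 hD2 hD3
      have : μ D ≤ sSup S := le_sSup ⟨D, hD1, hD2, hD3, rfl⟩
      simp [hs] at this
      simp [this]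
    · have hsfin : sSup S ≠ ⊤ :=
        ne_top_of_le_ne_top (tsub_le_self.trans_lt htfin.lt_top).ne hSle
      have hhalf : sSup S / 2 < sSup S := ENNReal.half_lt_self hs hsfin
      obtain ⟨r, ⟨C, hC1, hC2, hC3, rfl⟩, hr⟩ := lt_sSup_iff.mp hhalf
      refine ⟨C, hC1, hC2, ?_, ?_⟩
      · calc μ B + μ C ≤ μ B + (t - μ B) := by gcongr
          _ = t := add_tsub_cancel_of_le hBt
      · intro D hD1 hD2 hD3
        calc μ D ≤ sSup S := le_sSup ⟨D, hD1, hD2, hD3, rfl⟩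
          _ = 2 * (sSup S / 2) := (ENNReal.mul_div_cancel' (by norm_num) (by norm_num)).symm
          _ ≤ 2 * μ C := by gcongr
  choose Cf hC1 hC2 hC3 hC4 using step
  let seq : ℕ → {B : Set X // B ⊆ A ∧ MeasurableSet B ∧ μ B ≤ t} := fun n =>
    Nat.rec ⟨∅, Set.empty_subset _, MeasurableSet.empty, by simp⟩
      (fun _ p => ⟨p.1 ∪ Cf p.1 p.2.1 p.2.2.1 p.2.2.2,
        Set.union_subset p.2.1 ((hC1 _ _ _ _).trans Set.diff_subset),
        p.2.2.1.union (hC2 _ _ _ _),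
        le_trans (measure_union_le _ _) (hC3 _ _ _ _)⟩) n
  set Cn : ℕ → Set X := fun n =>
    Cf (seq n).1 (seq n).2.1 (seq n).2.2.1 (seq n).2.2.2 with hCn
  have hsucc : ∀ n, (seq (n+1)).1 = (seq n).1 ∪ Cn n := fun n => rfl
  have hdisj : ∀ n, Disjoint (seq n).1 (Cn n) := fun n =>
    Set.disjoint_sdiff_right.mono_right (hC1 _ _ _ _)
  have hμsucc : ∀ n, μ (seq (n+1)).1 = μ (seq n).1 + μ (Cn n) := by
    intro n
    rw [hsucc n]
    exact measure_union (hdisj n) (hC2 _ _ _ _)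
  have hmono : Monotone fun n => (seq n).1 := by
    apply monotone_nat_of_le_succ
    intro n
    rw [hsucc n]
    exact Set.subset_union_left
  set Binf : Set X := ⋃ n, (seq n).1 with hBinf
  have hBinfm : MeasurableSet Binf := MeasurableSet.iUnion fun n => (seq n).2.2.1
  have hBinfA : Binf ⊆ A := Set.iUnion_subset fun n => (seq n).2.1
  have hμBinf : μ Binf = ⨆ n, μ (seq n).1 := hmono.directed_le.measure_iUnion
  have hBinft : μ Binf ≤ t := by
    rw [hμBinf]
    exact iSup_le fun n => (seq n).2.2.2
  refine ⟨Binf, hBinfA, hBinfm, ?_⟩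
  by_contra hne
  have hlt : μ Binf < t := lt_of_le_of_ne hBinft hne
  have hBinffin : μ Binf ≠ ⊤ := (hlt.trans_le le_top).ne
  -- positive measure remainder
  have hpos : 0 < μ (A \ Binf) := by
    rw [measure_diff hBinfA hBinfm.nullMeasurableSet hBinffin]
    exact tsub_pos_of_lt (hlt.trans_le ht)
  obtain ⟨D, hDs, hDm, hD0, hDle⟩ := hEna.exists_small
    ((Set.diff_subset).trans hAE) (hA.diff hBinfm) hpos
    (ε := t - μ Binf) (tsub_pos_of_lt hlt).ne'
  have hDfin : μ D ≠ ⊤ := ((hDle.trans_lt (lt_of_le_of_lt tsub_le_self htfin.lt_top))).ne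
  have hkey : ∀ n, μ D ≤ 2 * μ (Cn n) := by
    intro n
    apply hC4
    · exact hDs.trans (Set.diff_subset_diff_right (Set.subset_iUnion (fun n => (seq n).1) n))
    · exact hDm
    · exact hDle.trans (tsub_le_tsub_left (measure_mono (Set.subset_iUnion (fun n => (seq n).1) n)) t)
  have hind : ∀ n : ℕ, (n : ℝ≥0∞) * μ D ≤ 2 * μ (seq n).1 := by
    intro n
    induction n with
    | zero => simp
    | succ n ih =>
      have := hkey n
      calc ((n+1 : ℕ) : ℝ≥0∞) * μ D = (n : ℝ≥0∞) * μ D + μ D := by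
            push_cast; ring
        _ ≤ 2 * μ (seq n).1 + 2 * μ (Cn n) := add_le_add ih this
        _ = 2 * μ (seq (n+1)).1 := by rw [hμsucc n, mul_add]
  have h2t : (2 : ℝ≥0∞) * t ≠ ⊤ := by
    simp [ENNReal.mul_eq_top, htfin]
  obtain ⟨n, hn⟩ := ENNReal.exists_nat_gt (r := 2 * t / μ D) (by
    exact (ENNReal.div_lt_top h2t hD0.ne').ne)
  rw [ENNReal.div_lt_iff (Or.inl hD0.ne') (Or.inl hDfin)] at hn
  have : (n : ℝ≥0∞) * μ D ≤ 2 * t :=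
    (hind n).trans (by gcongr; exact (seq n).2.2.2)
  exact absurd (hn.trans_le this) (lt_irrefl _)

end NonAtomicOn

lemma NonAtomicOn.exists_disjoint_family {μ : Measure X} {E : Set X}
    (hEna : NonAtomicOn μ E) {F : Set X} (hFE : F ⊆ E) (hF : MeasurableSet F)
    (hFfin : μ F ≠ ⊤) (t : ℕ → ℝ≥0∞) (ht : ∀ n, t n ≤ μ F / 2 ^ (n + 1)) :
    ∃ g : ℕ → Set X, (∀ n, g n ⊆ F) ∧ (∀ n, MeasurableSet (g n)) ∧
      Pairwise (Function.onFun Disjoint g) ∧ ∀ n, μ (g n) = t n := by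
  have hdivfin : ∀ n : ℕ, μ F / 2 ^ n ≠ ⊤ := fun n =>
    (ENNReal.div_lt_top hFfin (by positivity)).ne
  have hdivmono : ∀ n : ℕ, μ F / 2 ^ (n + 1) ≤ μ F / 2 ^ n := fun n =>
    ENNReal.div_le_div le_rfl (pow_le_pow_right₀ one_le_two (Nat.le_succ n))
  have step : ∀ n : ℕ, ∀ p : {W : Set X // W ⊆ F ∧ MeasurableSet W ∧ μ W = μ F / 2 ^ n},
      {W : Set X // W ⊆ p.1 ∧ MeasurableSet W ∧ μ W = μ F / 2 ^ (n + 1)} := by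
    intro n p
    have h := hEna.sierpinski (p.2.1.trans hFE) p.2.2.1
      (t := μ F / 2 ^ (n + 1)) (by rw [p.2.2.2]; exact hdivmono n) (hdivfin (n + 1))
    exact ⟨h.choose, h.choose_spec.1, h.choose_spec.2.1, h.choose_spec.2.2⟩
  let W : ∀ n : ℕ, {W : Set X // W ⊆ F ∧ MeasurableSet W ∧ μ W = μ F / 2 ^ n} := fun n =>
    Nat.rec ⟨F, subset_rfl, hF, by simp⟩
      (fun n p => ⟨(step n p).1, (step n p).2.1.trans p.2.1, (step n p).2.2.1,
        (step n p).2.2.2⟩) n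
  have hWsub : ∀ n, (W (n + 1)).1 ⊆ (W n).1 := fun n => (step n (W n)).2.1
  have hWanti : ∀ {m n : ℕ}, m ≤ n → (W n).1 ⊆ (W m).1 := by
    intro m n h
    induction h with
    | refl => exact subset_rfl
    | step h ih => exact (hWsub _).trans ih
  set R : ℕ → Set X := fun n => (W n).1 \ (W (n + 1)).1 with hR
  have hRm : ∀ n, MeasurableSet (R n) := fun n => (W n).2.2.1.diff (W (n + 1)).2.2.1
  have hRF : ∀ n, R n ⊆ F := fun n => Set.diff_subset.trans (W n).2.1
  have hRμ : ∀ n, μ (R n) = μ F / 2 ^ (n + 1) := by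
    intro n
    have hsum : μ F / 2 ^ n = μ F / 2 ^ (n + 1) + μ F / 2 ^ (n + 1) := by
      rw [ENNReal.div_add_div_same, pow_succ, ← mul_two (μ F),
        ENNReal.mul_div_mul_right _ _ two_ne_zero ENNReal.ofNat_ne_top]
    rw [hR]
    rw [measure_diff (hWsub n) (W (n + 1)).2.2.1.nullMeasurableSet
      (by rw [(W (n + 1)).2.2.2]; exact hdivfin (n + 1)), (W n).2.2.2, (W (n + 1)).2.2.2]
    exact ENNReal.sub_eq_of_eq_add (hdivfin (n + 1)) hsum
  have hRdisj : Pairwise (Function.onFun Disjoint R) := by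
    have key : ∀ m n, m < n → Disjoint (R m) (R n) := by
      intro m n hmn
      have : R n ⊆ (W (m + 1)).1 := Set.diff_subset.trans (hWanti hmn)
      exact (Set.disjoint_sdiff_left).mono_right this
    intro m n hmn
    rcases hmn.lt_or_gt with h | h
    · exact key m n h
    · exact (key n m h).symm
  have hpick : ∀ n : ℕ, ∃ B, B ⊆ R n ∧ MeasurableSet B ∧ μ B = t n := fun n =>
    hEna.sierpinski ((hRF n).trans hFE) (hRm n) (by rw [hRμ n]; exact ht n)
      (ne_top_of_le_ne_top (hdivfin (n + 1)) (ht n))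
  choose g hg1 hg2 hg3 using hpick
  exact ⟨g, fun n => (hg1 n).trans (hRF n), hg2, fun m n hmn => (hRdisj hmn).mono (hg1 m) (hg1 n), hg3⟩


/-- on a non-atomic set `E` of positive measure, if `Φ₂ ⊀ Φ₁`
then there is `f ∈ L^{Φ₁}(X)` whose restriction to `E` is not in `L^{Φ₂}(E)`. -/
theorem exists_memOrlicz_not_memOrlicz_restrict
    {X : Type*} [MeasurableSpace X] (μ : Measure X)
    (E : Set X) (hE : MeasurableSet E) (hEna : NonAtomicOn μ E) (hEpos : 0 < μ E)
    (Φ₁ Φ₂ : YoungFunction) (hΔ : YoungDeltaTwo Φ₂) (hw : ¬ YoungWeaker Φ₂ Φ₁) :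
    ∃ f : X → ℝ, MemOrlicz Φ₁ μ f ∧ ¬ MemOrlicz Φ₂ (μ.restrict E) f := by
  classical
  -- Step 1: a subset of positive finite measure
  obtain ⟨F, hFE, hFm, hF0, hFfin⟩ :
      ∃ F, F ⊆ E ∧ MeasurableSet F ∧ 0 < μ F ∧ μ F ≠ ⊤ := by
    by_cases h : μ E = ⊤
    · obtain ⟨B, hBs, hBm, hB0, hBlt⟩ := hEna.split subset_rfl hE hEpos
      exact ⟨B, hBs, hBm, hB0, by rw [h] at hBlt; exact hBlt.ne⟩
    · exact ⟨E, subset_rfl, hE, hEpos, h⟩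
  set m : ℝ := (μ F).toReal with hmdef
  have hm0 : 0 < m := ENNReal.toReal_pos hF0.ne' hFfin
  -- Step 2: choose the points xₙ
  have hwx : ∀ n : ℕ, ∃ x : ℝ, 1 ≤ x ∧ Φ₁ (((n : ℝ) + 1) * x) < Φ₂ x ∧
      (2 : ℝ) ^ (n + 1) / m ≤ Φ₂ x := by
    intro n
    obtain ⟨x₀, hx₀1, hx₀⟩ := Φ₂.exists_forall_ge ((2 : ℝ) ^ (n + 1) / m)
    unfold YoungWeaker at hw
    push_neg at hw
    obtain ⟨x, hxx₀, hx⟩ := hw ((n : ℝ) + 1) (by positivity) (max x₀ 1)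
      (le_trans zero_le_one (le_max_right _ _))
    exact ⟨x, le_trans (le_max_right x₀ 1) hxx₀, hx,
      hx₀ x (le_trans (le_max_left _ _) hxx₀)⟩
  choose x hx1 hxlt hxge using hwx
  have hx0 : ∀ n, 0 ≤ x n := fun n => zero_le_one.trans (hx1 n)
  have hΦ₂pos : ∀ n, 0 < Φ₂ (x n) := fun n => Φ₂.pos (by nlinarith [hx1 n])
  -- Step 3: the measures tₙ and the disjoint family
  set s : ℕ → ℝ := fun n => 1 / (((n : ℝ) + 1) * Φ₂ (x n)) with hsdef
  have hs0 : ∀ n, 0 < s n := fun n => by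
    have := hΦ₂pos n
    positivity
  have ht : ∀ n, ENNReal.ofReal (s n) ≤ μ F / 2 ^ (n + 1) := by
    intro n
    have hΦ := hΦ₂pos n
    have h2 : (2 : ℝ) ^ (n + 1) ≤ Φ₂ (x n) * m := (div_le_iff₀ hm0).mp (hxge n)
    have h1 : s n ≤ m / 2 ^ (n + 1) := by
      rw [hsdef]
      rw [div_le_div_iff₀ (by positivity) (by positivity)]
      have hn0 : (0 : ℝ) ≤ (n : ℝ) := Nat.cast_nonneg n
      nlinarith [h2, mul_nonneg (mul_nonneg hm0.le hn0) hΦ.le]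
    calc ENNReal.ofReal (s n) ≤ ENNReal.ofReal (m / 2 ^ (n + 1)) :=
          ENNReal.ofReal_le_ofReal h1
      _ = μ F / 2 ^ (n + 1) := by
          rw [ENNReal.ofReal_div_of_pos (by positivity), hmdef,
            ENNReal.ofReal_toReal hFfin]
          congr 1
          rw [ENNReal.ofReal_pow (by norm_num : (0:ℝ) ≤ 2)]
          norm_num
  obtain ⟨g, hgF, hgm, hgdisj, hgμ⟩ := hEna.exists_disjoint_family hFE hFm hFfin
    (fun n => ENNReal.ofReal (s n)) ht
  -- Step 4: the function f
  set fE : X → ℝ≥0∞ :=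
    fun a => ∑' n, (g n).indicator (fun _ => ENNReal.ofReal (x n)) a with hfEdef
  set f : X → ℝ := fun a => (fE a).toReal with hfdef
  have hfEmeas : Measurable fE :=
    Measurable.ennreal_tsum fun n => measurable_const.indicator (hgm n)
  have hfmeas : Measurable f := hfEmeas.ennreal_toReal
  have hnotmem : ∀ {n m : ℕ}, m ≠ n → ∀ {a : X}, a ∈ g n → a ∉ g m := by
    intro n m hmn a han hma
    exact Set.disjoint_left.mp (hgdisj hmn) hma han
  have hf_on : ∀ n, ∀ a ∈ g n, f a = x n := by
    intro n a han
    have hfEa : fE a = ENNReal.ofReal (x n) := by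
      refine (tsum_eq_single n fun m hmn => ?_).trans (Set.indicator_of_mem han _)
      exact Set.indicator_of_notMem (hnotmem hmn han) _
    rw [hfdef]
    simp only [hfEa, ENNReal.toReal_ofReal (hx0 n)]
  have hf_off : ∀ a, (∀ n, a ∉ g n) → f a = 0 := by
    intro a ha
    have hfEa : fE a = 0 := by
      rw [hfEdef]
      calc (∑' n, (g n).indicator (fun _ => ENNReal.ofReal (x n)) a)
          = ∑' (_ : ℕ), (0 : ℝ≥0∞) :=
            tsum_congr fun n => Set.indicator_of_notMem (ha n) _
        _ = 0 := tsum_zero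
    rw [hfdef]
    simp only [hfEa, ENNReal.toReal_zero]
  -- pointwise description of Ψ (k * f)
  have hpoint : ∀ (Ψ : YoungFunction) (k : ℝ) (a : X),
      ENNReal.ofReal (Ψ (k * f a)) =
        ∑' n, (g n).indicator (fun _ => ENNReal.ofReal (Ψ (k * x n))) a := by
    intro Ψ k a
    by_cases ha : ∃ n, a ∈ g n
    · obtain ⟨n, han⟩ := ha
      rw [hf_on n a han]
      symm
      refine (tsum_eq_single n fun m hmn => ?_).trans ?_
      · exact Set.indicator_of_notMem (hnotmem hmn han) _
      · exact Set.indicator_of_mem han _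
    · push_neg at ha
      rw [hf_off a ha, mul_zero, Ψ.map_zero, ENNReal.ofReal_zero]
      symm
      exact (tsum_congr fun n => Set.indicator_of_notMem (ha n) _).trans tsum_zero
  -- the lintegral of Ψ (k * f)
  have hcalc : ∀ (Ψ : YoungFunction) (k : ℝ) (ν : Measure X),
      (∀ n, ν (g n) = μ (g n)) →
      ∫⁻ a, ENNReal.ofReal (Ψ (k * f a)) ∂ν =
        ∑' n, ENNReal.ofReal (Ψ (k * x n)) * μ (g n) := by
    intro Ψ k ν hν
    rw [lintegral_congr (hpoint Ψ k),
      lintegral_tsum fun n => (measurable_const.indicator (hgm n)).aemeasurable]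
    exact tsum_congr fun n => by rw [lintegral_indicator_const (hgm n), hν n]
  refine ⟨f, ⟨hfmeas.aestronglyMeasurable, 1, one_pos, ?_⟩, ?_⟩
  · -- f ∈ L^{Φ₁}(μ)
    have hmeas1 : Measurable fun a => Φ₁ (1 * f a) :=
      Φ₁.continuous'.measurable.comp (hfmeas.const_mul 1)
    refine ⟨hmeas1.aestronglyMeasurable, ?_⟩
    rw [hasFiniteIntegral_iff_norm]
    have : ∫⁻ a, ENNReal.ofReal ‖Φ₁ (1 * f a)‖ ∂μ =
        ∑' n, ENNReal.ofReal (Φ₁ (1 * x n)) * μ (g n) := by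
      rw [lintegral_congr fun a => by rw [Real.norm_of_nonneg (Φ₁.nonneg _)]]
      exact hcalc Φ₁ 1 μ fun n => rfl
    rw [this]
    have hsummable : Summable fun n : ℕ => 1 / ((n : ℝ) + 1) ^ 2 := by
      have h := Real.summable_one_div_nat_pow.mpr (one_lt_two)
      exact ((summable_nat_add_iff 1).mpr h).congr fun n => by push_cast; ring
    have hterm : ∀ n, ENNReal.ofReal (Φ₁ (1 * x n)) * μ (g n) ≤
        ENNReal.ofReal (1 / ((n : ℝ) + 1) ^ 2) := by
      intro n
      rw [hgμ n, ← ENNReal.ofReal_mul (Φ₁.nonneg _)]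
      apply ENNReal.ofReal_le_ofReal
      have hΦ := hΦ₂pos n
      have hn1 : (0 : ℝ) < (n : ℝ) + 1 := by positivity
      have h1 : ((n : ℝ) + 1) * Φ₁ (x n) ≤ Φ₁ (((n : ℝ) + 1) * x n) :=
        Φ₁.mul_le (by linarith) (hx0 n)
      have h2 : Φ₁ (((n : ℝ) + 1) * x n) ≤ Φ₂ (x n) := (hxlt n).le
      rw [one_mul, hsdef, mul_one_div, div_le_div_iff₀ (by positivity) (by positivity)]
      nlinarith [Φ₁.nonneg (x n), mul_le_mul_of_nonneg_left (h1.trans h2) hn1.le]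
    calc (∑' n, ENNReal.ofReal (Φ₁ (1 * x n)) * μ (g n))
        ≤ ∑' (n : ℕ), ENNReal.ofReal (1 / ((n : ℝ) + 1) ^ 2) := ENNReal.tsum_le_tsum hterm
      _ = ENNReal.ofReal (∑' (n : ℕ), 1 / ((n : ℝ) + 1) ^ 2) :=
          (ENNReal.ofReal_tsum_of_nonneg (fun n => by positivity) hsummable).symm
      _ < ⊤ := ENNReal.ofReal_lt_top
  · -- f ∉ L^{Φ₂}(E)
    rintro ⟨-, k, hk, hint2⟩
    obtain ⟨c, hc0, hcs⟩ := YoungFunction.delta2_iter hΔ hk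
    have hfi := hint2.hasFiniteIntegral
    rw [hasFiniteIntegral_iff_norm] at hfi
    have hres : ∀ n, (μ.restrict E) (g n) = μ (g n) := by
      intro n
      rw [Measure.restrict_apply (hgm n),
        Set.inter_eq_self_of_subset_left ((hgF n).trans hFE)]
    have heq : ∫⁻ a, ENNReal.ofReal ‖Φ₂ (k * f a)‖ ∂(μ.restrict E) =
        ∑' n, ENNReal.ofReal (Φ₂ (k * x n)) * μ (g n) := by
      rw [lintegral_congr fun a => by rw [Real.norm_of_nonneg (Φ₂.nonneg _)]]
      exact hcalc Φ₂ k (μ.restrict E) hres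
    rw [heq] at hfi
    have hlow : ∀ n : ℕ, ENNReal.ofReal (c⁻¹ * (1 / ((n : ℝ) + 1))) ≤
        ENNReal.ofReal (Φ₂ (k * x n)) * μ (g n) := by
      intro n
      rw [hgμ n, ← ENNReal.ofReal_mul (Φ₂.nonneg _)]
      apply ENNReal.ofReal_le_ofReal
      have hΦ := hΦ₂pos n
      have hn1 : (0 : ℝ) < (n : ℝ) + 1 := by positivity
      have h1 : Φ₂ (x n) ≤ c * Φ₂ (k * x n) := hcs (x n) (hx0 n)
      have hkey : c⁻¹ * Φ₂ (x n) ≤ Φ₂ (k * x n) := by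
        rw [inv_mul_le_iff₀ hc0]
        exact h1
      simp only [hsdef, mul_one_div]
      rw [le_div_iff₀ (by positivity)]
      calc c⁻¹ / ((n : ℝ) + 1) * (((n : ℝ) + 1) * Φ₂ (x n))
          = c⁻¹ * Φ₂ (x n) := by field_simp
        _ ≤ Φ₂ (k * x n) := hkey
    have hdiv : (∑' n : ℕ, ENNReal.ofReal (c⁻¹ * (1 / ((n : ℝ) + 1)))) = ⊤ := by
      by_contra h
      have hsum := ENNReal.summable_toReal h
      have h1 : Summable fun n : ℕ => c⁻¹ * (1 / ((n : ℝ) + 1)) := by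
        refine hsum.congr fun n => ?_
        rw [ENNReal.toReal_ofReal (by positivity)]
      have h2 : Summable fun n : ℕ => 1 / (((n : ℕ) + 1 : ℕ) : ℝ) := by
        refine (h1.mul_left c).congr fun n => ?_
        push_cast
        field_simp
      have h3 : Summable fun n : ℕ => 1 / (n : ℝ) := (summable_nat_add_iff 1).mp h2
      exact Real.not_summable_one_div_natCast h3
    have htop : (⊤ : ℝ≥0∞) ≤ ∑' n, ENNReal.ofReal (Φ₂ (k * x n)) * μ (g n) :=
      hdiv ▸ ENNReal.tsum_le_tsum hlow
    exact absurd (lt_of_le_of_lt htop hfi) (lt_irrefl ⊤)
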